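/- arXiv:1901.03940 — 4 statements merged into one kernel-verified Lean document; each statement's English description precedes it below -/
import Mathlib

section
/- Let ρ_t ∈ ℂ^N with ‖ρ_t‖ = 1 and let ρ ∈ ℂ^N satisfy dist(ρ, ρ_t) ≤ ε with ε < 1. Then ‖ρρ^H - ρ_t ρ_t^H‖_F ≥ √((1-ε)(2-ε))·dist(ρ, ρ_t). -/
open ComplexConjugate

/-- Outer product `x yᴴ`. -/
noncomputable def outer {N : ℕ} (x y : EuclideanSpace ℂ (Fin N)) :
    Matrix (Fin N) (Fin N) ℂ := Matrix.of fun i j => x i * conj (y j)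

/-- The Frobenius norm. -/
noncomputable def frobNorm {N : ℕ} (A : Matrix (Fin N) (Fin N) ℂ) : ℝ :=
  Real.sqrt (∑ i, ∑ j, Complex.normSq (A i j))

/-- Phase-invariant distance `dist(ρ, ρ_t) = min_φ ‖ρ - e^{iφ} ρ_t‖`. -/
noncomputable def pdist {N : ℕ} (x y : EuclideanSpace ℂ (Fin N)) : ℝ :=
  sInf {r : ℝ | ∃ φ : ℝ, r = ‖x - Complex.exp (φ * Complex.I) • y‖}

set_option maxHeartbeats 1000000

lemma key_arith (b s d ε : ℝ) (hs : 0 ≤ s) (hsb : s ≤ b)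
    (hd : 0 ≤ d) (hde : d ≤ ε) (he : ε < 1) (hd2 : d^2 = b^2 + 1 - 2*s) :
    (1-ε)*(2-ε)*d^2 ≤ b^4 + 1 - 2*s^2 := by
  have hε0 : 0 ≤ ε := le_trans hd hde
  have hd2e : d^2 ≤ ε^2 := by nlinarith
  have h2s : b^2 + 1 - ε^2 ≤ 2*s := by nlinarith
  have hbsq : (b-1)^2 ≤ ε^2 := by nlinarith
  have hb1 : 1 - ε ≤ b := by nlinarith [hbsq]
  rw [hd2]
  have hQ : 0 ≤ 2*s - (b^2+1-ε^2) := by linarith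
  have hR : 0 ≤ b - s := by linarith
  have hP : 0 ≤ ε^2 - (b-1)^2 := by linarith
  have h1 : 0 ≤ (b-1)^2 * ((b+1)^2 - (1-ε)*(2-ε)) :=
    mul_nonneg (sq_nonneg _) (by nlinarith)
  have h2 : 0 ≤ b^4 + 1 - (b^2+1-ε^2)^2/2 - (1-ε)*(2-ε)*ε^2 := by
    nlinarith [sq_nonneg (b^2 - (1-ε^2)), mul_nonneg (mul_nonneg hε0 hε0) hε0]
  rcases hP.lt_or_eq with hP' | hP'
  · nlinarith [mul_nonneg hR h2, mul_nonneg hQ h1, mul_nonneg (mul_nonneg hP hQ) hR, hP']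
  · have hsb' : s = b := by nlinarith
    rw [hsb']
    nlinarith [h1]

lemma norm_sub_phase_sq {N : ℕ} (x y : EuclideanSpace ℂ (Fin N)) (φ : ℝ) :
    ‖x - Complex.exp (φ * Complex.I) • y‖^2
      = ‖x‖^2 + ‖y‖^2 - 2 * (Complex.exp (φ * Complex.I) * (inner ℂ x y : ℂ)).re := by
  rw [@norm_sub_sq ℂ _ _ _ _ x (Complex.exp (φ * Complex.I) • y), inner_smul_right,
    norm_smul]
  simp [Complex.norm_exp_ofReal_mul_I]
  ring

lemma pdist_eq {N : ℕ} (x y : EuclideanSpace ℂ (Fin N)) :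
    pdist x y = Real.sqrt (‖x‖^2 + ‖y‖^2 - 2 * ‖(inner ℂ x y : ℂ)‖) := by
  set w : ℂ := inner ℂ x y with hw
  apply IsLeast.csInf_eq
  constructor
  · refine ⟨-w.arg, ?_⟩
    have h0 : Complex.exp ((↑(-w.arg) : ℂ) * Complex.I) * w = (‖w‖ : ℂ) := by
      nth_rewrite 2 [← Complex.norm_mul_exp_arg_mul_I w]
      rw [mul_comm (‖w‖ : ℂ), ← mul_assoc, ← Complex.exp_add]
      push_cast
      ring_nf
      simp
    have h1 := norm_sub_phase_sq x y (-w.arg)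
    rw [← hw, h0] at h1
    simp only [Complex.ofReal_re] at h1
    rw [← h1, Real.sqrt_sq (norm_nonneg _)]
  · rintro r ⟨φ, rfl⟩
    have h1 := norm_sub_phase_sq x y φ
    have h2 : (Complex.exp (φ * Complex.I) * w).re ≤ ‖w‖ := by
      calc (Complex.exp (φ * Complex.I) * w).re
          ≤ ‖Complex.exp (φ * Complex.I) * w‖ := Complex.re_le_norm _
        _ = ‖w‖ := by simp [Complex.norm_exp_ofReal_mul_I]
    calc Real.sqrt (‖x‖^2 + ‖y‖^2 - 2 * ‖w‖)
        ≤ Real.sqrt (‖x - Complex.exp (φ * Complex.I) • y‖^2) := by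
          apply Real.sqrt_le_sqrt; rw [h1, ← hw]; linarith
      _ = _ := Real.sqrt_sq (norm_nonneg _)

lemma expand_entry (a b c d : ℂ) :
    Complex.normSq (a * conj b - c * conj d)
      = Complex.normSq a * Complex.normSq b + Complex.normSq c * Complex.normSq d
        - 2 * ((a * conj c) * (conj b * d)).re := by
  rw [Complex.normSq_sub]
  simp only [Complex.normSq_mul, Complex.normSq_conj]
  congr 2
  rw [map_mul, Complex.conj_conj]
  ring

lemma frob_sq {N : ℕ} (ρ ρt : EuclideanSpace ℂ (Fin N)) :
    (∑ i, ∑ j, Complex.normSq ((outer ρ ρ - outer ρt ρt) i j))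
      = (∑ i, Complex.normSq (ρ i))^2 + (∑ i, Complex.normSq (ρt i))^2
        - 2 * Complex.normSq (∑ i, conj (ρ i) * ρt i) := by
  have h : ∀ i j : Fin N, (outer ρ ρ - outer ρt ρt) i j
      = ρ i * conj (ρ j) - ρt i * conj (ρt j) := by
    intro i j; simp [outer]
  simp_rw [h, expand_entry]
  have step : ∀ i : Fin N,
      ∑ j, (Complex.normSq (ρ i) * Complex.normSq (ρ j)
          + Complex.normSq (ρt i) * Complex.normSq (ρt j)
          - 2 * ((ρ i * conj (ρt i)) * (conj (ρ j) * ρt j)).re)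
        = Complex.normSq (ρ i) * ∑ j, Complex.normSq (ρ j)
          + Complex.normSq (ρt i) * ∑ j, Complex.normSq (ρt j)
          - 2 * ((ρ i * conj (ρt i)) * ∑ j, conj (ρ j) * ρt j).re := by
    intro i
    rw [Finset.sum_sub_distrib, Finset.sum_add_distrib, ← Finset.mul_sum, ← Finset.mul_sum,
      ← Finset.mul_sum, ← Complex.re_sum, ← Finset.mul_sum]
  simp_rw [step]
  rw [Finset.sum_sub_distrib, Finset.sum_add_distrib, ← Finset.sum_mul, ← Finset.sum_mul,
    ← Finset.mul_sum, ← Complex.re_sum, ← Finset.sum_mul]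
  congr 1
  · rw [sq, sq]
  have hc : (∑ i, ρ i * conj (ρt i)) = conj (∑ j, conj (ρ j) * ρt j) := by
    rw [map_sum]
    congr 1; funext j
    rw [map_mul, Complex.conj_conj, mul_comm]
  rw [hc]
  rw [mul_comm ((starRingEnd ℂ) _)]
  rw [Complex.mul_conj]
  simp [mul_comm]

lemma norm_sq_eq_sum_normSq {N : ℕ} (x : EuclideanSpace ℂ (Fin N)) :
    ‖x‖^2 = ∑ i, Complex.normSq (x i) := by
  rw [EuclideanSpace.norm_eq, Real.sq_sqrt (by positivity)]
  congr 1; funext i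
  rw [Complex.sq_norm]

/-- If `‖ρ_t‖ = 1` and `dist(ρ, ρ_t) ≤ ε < 1` then
`‖ρρᴴ - ρ_tρ_tᴴ‖_F ≥ √((1-ε)(2-ε))·dist(ρ, ρ_t)`. -/
theorem frobNorm_outer_sub_ge {N : ℕ} (ρ ρt : EuclideanSpace ℂ (Fin N)) (ε : ℝ)
    (hρt : ‖ρt‖ = 1) (hdist : pdist ρ ρt ≤ ε) (hε : ε < 1) :
    Real.sqrt ((1 - ε) * (2 - ε)) * pdist ρ ρt ≤
      frobNorm (outer ρ ρ - outer ρt ρt) := by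
  set b : ℝ := ‖ρ‖ with hb
  set w : ℂ := inner ℂ ρ ρt with hw
  set s : ℝ := ‖w‖ with hs
  have hs0 : 0 ≤ s := norm_nonneg w
  have hCS : s ≤ b := by
    have := norm_inner_le_norm (𝕜 := ℂ) ρ ρt
    rw [hρt, mul_one] at this
    simpa [hs] using this
  have hd : pdist ρ ρt = Real.sqrt (b^2 + 1 - 2*s) := by
    rw [pdist_eq, hρt, one_pow, ← hw, ← hs, ← hb]
  have hA : 0 ≤ b^2 + 1 - 2*s := by nlinarith [sq_nonneg (b - 1)]
  have hd2 : (pdist ρ ρt)^2 = b^2 + 1 - 2*s := by rw [hd, Real.sq_sqrt hA]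
  have hdpos : 0 ≤ pdist ρ ρt := hd ▸ Real.sqrt_nonneg _
  -- Frobenius norm computation
  have hwsum : w = ∑ i, conj (ρ i) * ρt i := by
    rw [hw]
    simp [PiLp.inner_apply, RCLike.inner_apply, mul_comm]
  have hF : frobNorm (outer ρ ρ - outer ρt ρt) = Real.sqrt (b^4 + 1 - 2*s^2) := by
    rw [frobNorm, frob_sq]
    congr 1
    rw [← norm_sq_eq_sum_normSq, ← norm_sq_eq_sum_normSq, ← hwsum, hρt, ← hb]
    have : Complex.normSq w = s^2 := by rw [hs, ← Complex.sq_norm]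
    rw [this]
    ring
  rw [hF]
  have hkey : (1-ε)*(2-ε)*(pdist ρ ρt)^2 ≤ b^4 + 1 - 2*s^2 :=
    key_arith b s (pdist ρ ρt) ε hs0 hCS hdpos hdist hε hd2
  calc Real.sqrt ((1 - ε) * (2 - ε)) * pdist ρ ρt
      = Real.sqrt ((1 - ε) * (2 - ε) * (pdist ρ ρt)^2) := by
        rw [Real.sqrt_mul (by nlinarith : (0:ℝ) ≤ (1-ε)*(2-ε)), Real.sqrt_sq hdpos]
    _ ≤ Real.sqrt (b^4 + 1 - 2*s^2) := Real.sqrt_le_sqrt hkey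
end

section
/- Let X be a Hermitian PSD N×N matrix, ρ_t a unit vector, and suppose ‖X - ρ_t ρ_t^H‖ ≤ δ in spectral norm with δ < 1. Let v₀ be a unit leading eigenvector of X and θ the angle with cos θ = |⟨ρ_t, v₀⟩|. Then sin²(θ) ≤ δ/(1-δ). -/
open ComplexConjugate
open scoped ComplexOrder

/-- The spectral (operator) norm of a matrix. -/
noncomputable def specNorm {N : ℕ} (A : Matrix (Fin N) (Fin N) ℂ) : ℝ :=
  ‖LinearMap.toContinuousLinearMap (Matrix.toEuclideanLin A)‖

private lemma sum_euc_apply {N : ℕ} (f : Fin N → EuclideanSpace ℂ (Fin N)) (i : Fin N) :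
    (∑ j, f j) i = ∑ j, f j i :=
  by rw [WithLp.ofLp_sum]; exact Finset.sum_apply i Finset.univ (fun j => (f j : Fin N → ℂ))

private lemma eig_apply {N : ℕ} (X : Matrix (Fin N) (Fin N) ℂ) (hX : X.IsHermitian) (i : Fin N) :
    Matrix.toEuclideanLin X (hX.eigenvectorBasis i)
      = (hX.eigenvalues i : ℂ) • hX.eigenvectorBasis i := by
  have h := hX.mulVec_eigenvectorBasis i
  rw [Matrix.toEuclideanLin_apply]
  ext1 j
  have h' := congrFun h j
  simp only [Pi.smul_apply, Complex.real_smul] at h'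
  simp [h']

private lemma outer_apply {N : ℕ} (x y z : EuclideanSpace ℂ (Fin N)) :
    Matrix.toEuclideanLin (outer x y) z = (inner ℂ y z : ℂ) • x := by
  rw [Matrix.toEuclideanLin_apply]
  ext1 i
  simp [outer, Matrix.mulVec, dotProduct, PiLp.inner_apply, Finset.sum_mul,
    RCLike.inner_apply]
  exact Finset.sum_congr rfl fun j _ => by ring

private lemma rayleigh_le {N : ℕ} (X : Matrix (Fin N) (Fin N) ℂ) (hX : X.IsHermitian)
    (x : EuclideanSpace ℂ (Fin N)) (hx : ‖x‖ = 1) :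
    Complex.re (inner ℂ x (Matrix.toEuclideanLin X x) : ℂ) ≤ ⨆ i, hX.eigenvalues i := by
  have hne : Nonempty (Fin N) := by
    rcases Nat.eq_zero_or_pos N with h | h
    · exfalso; subst h
      have : x = 0 := Subsingleton.elim _ _
      rw [this, norm_zero] at hx; norm_num at hx
    · exact ⟨⟨0, h⟩⟩
  set B := hX.eigenvectorBasis with hB
  set c : Fin N → ℂ := fun i => B.repr x i with hc
  have hrepr : ∀ i, B.repr (Matrix.toEuclideanLin X x) i = (hX.eigenvalues i : ℂ) * c i := by
    intro i
    conv_lhs => rw [← B.sum_repr x]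
    rw [map_sum, map_sum]
    rw [sum_euc_apply]
    simp only [map_smul, hB, eig_apply X hX, map_smul, OrthonormalBasis.repr_self]
    simp [EuclideanSpace.single_apply, hc, hB, mul_comm]
  have hinner : (inner ℂ x (Matrix.toEuclideanLin X x) : ℂ)
      = ∑ i, conj (c i) * ((hX.eigenvalues i : ℂ) * c i) := by
    rw [← B.repr.inner_map_map x (Matrix.toEuclideanLin X x)]
    rw [PiLp.inner_apply]
    exact Finset.sum_congr rfl fun i _ => by rw [hrepr i, RCLike.inner_apply]; simp only [hc]; ring
  have hre : Complex.re (inner ℂ x (Matrix.toEuclideanLin X x) : ℂ)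
      = ∑ i, hX.eigenvalues i * ‖c i‖ ^ 2 := by
    rw [hinner, Complex.re_sum]
    refine Finset.sum_congr rfl fun i _ => ?_
    have h0 : conj (c i) * c i = ((‖c i‖ : ℂ)) ^ 2 := RCLike.conj_mul (c i)
    have : conj (c i) * ((hX.eigenvalues i : ℂ) * c i)
        = ((hX.eigenvalues i * ‖c i‖ ^ 2 : ℝ) : ℂ) := by
      rw [show conj (c i) * ((hX.eigenvalues i : ℂ) * c i)
        = (hX.eigenvalues i : ℂ) * (conj (c i) * c i) from by ring, h0]
      push_cast; ring
    rw [this, Complex.ofReal_re]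
  rw [hre]
  have hsum : ∑ i, ‖c i‖ ^ 2 = 1 := by
    have h1 : ‖B.repr x‖ = 1 := by rw [B.repr.norm_map, hx]
    have h2 : ‖B.repr x‖ ^ 2 = ∑ i, ‖c i‖ ^ 2 := by
      rw [EuclideanSpace.norm_eq]
      rw [Real.sq_sqrt (by positivity)]
    rw [h1] at h2; norm_num at h2; exact h2.symm
  calc ∑ i, hX.eigenvalues i * ‖c i‖ ^ 2
      ≤ ∑ i, (⨆ j, hX.eigenvalues j) * ‖c i‖ ^ 2 := by
        refine Finset.sum_le_sum fun i _ => ?_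
        exact mul_le_mul_of_nonneg_right
          (le_ciSup (Set.finite_range _).bddAbove i) (by positivity)
    _ = ⨆ j, hX.eigenvalues j := by rw [← Finset.mul_sum, hsum, mul_one]

/-- If `X` is Hermitian PSD, `ρ_t` is a unit vector with `‖X - ρ_tρ_tᴴ‖ ≤ δ < 1`
in spectral norm, `v₀` is a unit leading eigenvector of `X` and `θ` the angle
with `cos θ = |⟨ρ_t, v₀⟩|`, then `sin²θ ≤ δ/(1-δ)`. -/
theorem sin_sq_angle_bound {N : ℕ} (X : Matrix (Fin N) (Fin N) ℂ)
    (hX : X.PosSemidef) (ρt v₀ : EuclideanSpace ℂ (Fin N))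
    (hρt : ‖ρt‖ = 1) (hv₀ : ‖v₀‖ = 1) (δ θ : ℝ) (hδ : δ < 1)
    (hnear : specNorm (X - outer ρt ρt) ≤ δ)
    (hlead : Matrix.toEuclideanLin X v₀ = ((⨆ i, hX.1.eigenvalues i : ℝ) : ℂ) • v₀)
    (hcos : Real.cos θ = ‖(inner ℂ ρt v₀ : ℂ)‖) :
    Real.sin θ ^ 2 ≤ δ / (1 - δ) := by
  classical
  set lam : ℝ := ⨆ i, hX.1.eigenvalues i with hlam
  set β : ℂ := (inner ℂ ρt v₀ : ℂ) with hβ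
  set c2 : ℝ := ‖β‖ ^ 2 with hc2
  set s2 : ℝ := 1 - c2 with hs2
  set T : EuclideanSpace ℂ (Fin N) →ₗ[ℂ] EuclideanSpace ℂ (Fin N) :=
    Matrix.toEuclideanLin X with hT
  set Ef : EuclideanSpace ℂ (Fin N) →ₗ[ℂ] EuclideanSpace ℂ (Fin N) :=
    Matrix.toEuclideanLin (X - outer ρt ρt) with hEf
  have hδ0 : 0 ≤ δ := le_trans (norm_nonneg _) hnear
  have h1δ : 0 < 1 - δ := by linarith
  -- operator norm bound on Ef
  have hEb : ∀ y : EuclideanSpace ℂ (Fin N), ‖Ef y‖ ≤ δ * ‖y‖ := by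
    intro y
    have h1 : ‖Ef y‖ ≤ specNorm (X - outer ρt ρt) * ‖y‖ :=
      (LinearMap.toContinuousLinearMap Ef).le_opNorm y
    exact h1.trans (mul_le_mul_of_nonneg_right hnear (norm_nonneg _))
  -- quadratic form bound on Ef
  have hEq : ∀ y : EuclideanSpace ℂ (Fin N), ‖(inner ℂ y (Ef y) : ℂ)‖ ≤ δ * ‖y‖ ^ 2 := by
    intro y
    calc ‖(inner ℂ y (Ef y) : ℂ)‖ ≤ ‖y‖ * ‖Ef y‖ := norm_inner_le_norm _ _
      _ ≤ ‖y‖ * (δ * ‖y‖) := mul_le_mul_of_nonneg_left (hEb y) (norm_nonneg _)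
      _ = δ * ‖y‖ ^ 2 := by ring
  -- split T
  have hsplit : ∀ y : EuclideanSpace ℂ (Fin N),
      T y = (inner ℂ ρt y : ℂ) • ρt + Ef y := by
    intro y
    have : X = outer ρt ρt + (X - outer ρt ρt) := by abel
    rw [hT, hEf]
    conv_lhs => rw [this]
    rw [map_add, LinearMap.add_apply, outer_apply]
  have hsym : ∀ x y : EuclideanSpace ℂ (Fin N), (inner ℂ (T x) y : ℂ) = inner ℂ x (T y) :=
    Matrix.isHermitian_iff_isSymmetric.mp hX.1
  have hTv : T v₀ = (lam : ℂ) • v₀ := hlead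
  have hρρ : (inner ℂ ρt ρt : ℂ) = 1 := by
    rw [inner_self_eq_norm_sq_to_K, hρt]; norm_num
  have hv0v0 : (inner ℂ v₀ v₀ : ℂ) = 1 := by
    rw [inner_self_eq_norm_sq_to_K, hv₀]; norm_num
  have hvρ : (inner ℂ v₀ ρt : ℂ) = conj β := by rw [hβ, ← inner_conj_symm]
  have hconjβ : conj β * β = (c2 : ℂ) := by
    rw [RCLike.conj_mul, hc2]; norm_cast
  have hvTρ : (inner ℂ v₀ (T ρt) : ℂ) = (lam : ℂ) * conj β := by
    rw [← hsym v₀ ρt, hTv, inner_smul_left, hvρ, Complex.conj_ofReal]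
  set u : EuclideanSpace ℂ (Fin N) := v₀ - β • ρt with hu_def
  set z : EuclideanSpace ℂ (Fin N) := ρt - conj β • v₀ with hz_def
  set q' : ℂ := (inner ℂ ρt (T ρt) : ℂ) with hq'
  -- inner ℂ products with u and z
  have hρu : (inner ℂ ρt u : ℂ) = 0 := by
    rw [hu_def, inner_sub_right, inner_smul_right, hρρ, ← hβ]; ring
  have huu : (inner ℂ u u : ℂ) = (s2 : ℝ) := by
    rw [hu_def]
    simp only [inner_sub_left, inner_sub_right, inner_smul_left, inner_smul_right,
      hv0v0, hρρ, hvρ, ← hβ]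
    rw [hs2]; push_cast
    rw [← hconjβ]; ring
  have hnormu : ‖u‖ ^ 2 = s2 := by
    have h := inner_self_eq_norm_sq_to_K (𝕜 := ℂ) (x := u)
    rw [huu] at h
    exact Complex.ofReal_inj.mp (by push_cast; exact h.symm)
  have hs2nn : 0 ≤ s2 := hnormu ▸ sq_nonneg ‖u‖
  have hc2nn : 0 ≤ c2 := sq_nonneg _
  -- the key identity ⟪u,Tu⟫ = lam s2² + c2 ⟪z,Tz⟫
  have hu_in : (inner ℂ u (T u) : ℂ) = (lam : ℂ) * (1 - 2 * c2) + (c2 : ℂ) * q' := by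
    have hTu : T u = (lam : ℂ) • v₀ - β • T ρt := by
      rw [hu_def, map_sub, map_smul, hTv]
    rw [hu_def, hTu]
    simp only [inner_sub_left, inner_sub_right, inner_smul_left, inner_smul_right,
      hv0v0, hρρ, hvρ, hvTρ, ← hβ, ← hq', Complex.conj_ofReal]
    rw [← hconjβ]; ring
  have hz_in : (inner ℂ z (T z) : ℂ) = q' - (c2 : ℂ) * (lam : ℂ) := by
    have hTz : T z = T ρt - ((lam : ℂ) * conj β) • v₀ := by
      rw [hz_def, map_sub, map_smul, hTv, smul_smul, mul_comm]
    rw [hz_def, hTz]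
    simp only [inner_sub_left, inner_sub_right, inner_smul_left, inner_smul_right,
      hv0v0, hρρ, hvρ, hvTρ, ← hβ, ← hq', Complex.conj_conj, map_mul, Complex.conj_ofReal]
    rw [← hconjβ]; ring
  have hmain : (inner ℂ u (T u) : ℂ)
      = ((lam * s2 ^ 2 : ℝ) : ℂ) + ((c2 : ℝ) : ℂ) * (inner ℂ z (T z) : ℂ) := by
    rw [hu_in, hz_in, hs2]; push_cast; ring
  have hw0 : 0 ≤ Complex.re (inner ℂ z (T z) : ℂ) :=
    by rw [hT, Matrix.toEuclideanLin_apply, EuclideanSpace.inner_eq_star_dotProduct, dotProduct_comm]; exact hX.re_dotProduct_nonneg (WithLp.equiv 2 _ z)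
  have hr_eq : Complex.re (inner ℂ u (T u) : ℂ)
      = lam * s2 ^ 2 + c2 * Complex.re (inner ℂ z (T z) : ℂ) := by
    rw [hmain, Complex.add_re, Complex.ofReal_re, Complex.re_ofReal_mul]
  have hTu0 : T u = Ef u := by rw [hsplit u, hρu]; simp
  have hr_le : Complex.re (inner ℂ u (T u) : ℂ) ≤ δ * s2 := by
    rw [hTu0]
    calc Complex.re (inner ℂ u (Ef u) : ℂ) ≤ ‖(inner ℂ u (Ef u) : ℂ)‖ :=
          Complex.re_le_norm _
      _ ≤ δ * ‖u‖ ^ 2 := hEq u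
      _ = δ * s2 := by rw [hnormu]
  have hq_le : Complex.re q' ≤ lam := rayleigh_le X hX.1 ρt hρt
  have hTρ : T ρt = ρt + Ef ρt := by rw [hsplit ρt, hρρ, one_smul]
  have hq_ge : 1 - δ ≤ Complex.re q' := by
    have h1 : q' = 1 + (inner ℂ ρt (Ef ρt) : ℂ) := by
      rw [hq', hTρ, inner_add_right, hρρ]
    have h2 : ‖(inner ℂ ρt (Ef ρt) : ℂ)‖ ≤ δ := by
      simpa [hρt] using hEq ρt
    have h3 : -δ ≤ Complex.re (inner ℂ ρt (Ef ρt) : ℂ) := by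
      have h4 : |Complex.re (inner ℂ ρt (Ef ρt) : ℂ)| ≤ δ :=
        le_trans (Complex.abs_re_le_norm _) h2
      linarith [(abs_le.mp h4).1]
    rw [h1]
    simp only [Complex.add_re, Complex.one_re]
    linarith
  have key : lam * s2 ^ 2 ≤ δ * s2 := by
    have h5 := hr_le
    rw [hr_eq] at h5
    linarith [mul_nonneg hc2nn hw0]
  have hsin : Real.sin θ ^ 2 = s2 := by
    rw [Real.sin_sq, hcos, hs2, hc2]
  rw [hsin]
  rcases eq_or_lt_of_le hs2nn with h0 | h0
  · rw [← h0]
    exact div_nonneg hδ0 h1δ.le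
  · rw [le_div_iff₀ h1δ]
    have hlam_ge : 1 - δ ≤ lam := le_trans hq_ge hq_le
    have hls : lam * s2 ≤ δ := by
      have h6 : (lam * s2) * s2 ≤ δ * s2 := by
        calc (lam * s2) * s2 = lam * s2 ^ 2 := by ring
          _ ≤ δ * s2 := key
      exact le_of_mul_le_mul_right h6 h0
    calc s2 * (1 - δ) ≤ s2 * lam := mul_le_mul_of_nonneg_left hlam_ge hs2nn
      _ = lam * s2 := mul_comm _ _
      _ ≤ δ := hls
end

section
/- Let ρ_t ∈ ℂ^N with ‖ρ_t‖=1, let A be linear satisfying |⟨X, (A^H A - I)(vv^H)⟩_F| ≤ δ₁ ‖X‖_* for all unit vectors v and all Hermitian X with ‖X‖_* denoting the nuclear norm (implied by the RIP over rank-1 PSD matrices with constant δ₁). If ρ ∈ ℂ^N satisfies dist(ρ, ρ_t) ≤ ε < 1, then with E = ρρ^H - ρ_tρ_t^H, |⟨E, (A^H A - I)(E)⟩_F| ≤ δ₂ ‖E‖_F² where δ₂ = √2(2+ε)δ₁/√((1-ε)(2-ε)), and consequently (1-δ₂)‖E‖_F² ≤ ‖A(E)‖² ≤ (1+δ₂)‖E‖_F².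 -/
open ComplexConjugate

/-- The lifted rank-1 PSD matrix `ρρᴴ` as an element of the Frobenius Hilbert space. -/
noncomputable def outerE {N : ℕ} (x : EuclideanSpace ℂ (Fin N)) :
    EuclideanSpace ℂ (Fin N × Fin N) := WithLp.toLp 2 (fun p : Fin N × Fin N => x p.1 * conj (x p.2))

/-- A matrix viewed as an element of the Frobenius Hilbert space. -/
noncomputable def toMatE {N : ℕ} (X : Matrix (Fin N) (Fin N) ℂ) :
    EuclideanSpace ℂ (Fin N × Fin N) := WithLp.toLp 2 (fun p : Fin N × Fin N => X p.1 p.2)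

theorem inner_outerE {N : ℕ} (x y : EuclideanSpace ℂ (Fin N)) :
    (inner ℂ (outerE x) (outerE y) : ℂ) = conj (inner ℂ x y : ℂ) * (inner ℂ x y : ℂ) := by
  simp only [PiLp.inner_apply, RCLike.inner_apply, outerE]
  rw [Fintype.sum_prod_type]
  simp only [map_mul, map_sum, Complex.conj_conj]
  rw [Finset.sum_mul_sum, Finset.sum_comm]
  exact Finset.sum_congr rfl fun j _ => Finset.sum_congr rfl fun i _ => by ring

set_option maxHeartbeats 1000000 in
/-- Local RIP-2: under the testing bound `|⟨X, (AᴴA-I)(vvᴴ)⟩_F| ≤ δ₁‖X‖_*` for all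
unit `v` and Hermitian `X`, if `dist(ρ, ρ_t) ≤ ε < 1` with `‖ρ_t‖ = 1`, then with
`E = ρρᴴ - ρ_tρ_tᴴ` and `δ₂ = √2(2+ε)δ₁/√((1-ε)(2-ε))`:
`|⟨E, (AᴴA - I)(E)⟩_F| ≤ δ₂‖E‖_F²` and `(1-δ₂)‖E‖_F² ≤ ‖A(E)‖² ≤ (1+δ₂)‖E‖_F²`. -/
theorem local_RIP2 {N M : ℕ}
    (A : EuclideanSpace ℂ (Fin N × Fin N) →ₗ[ℂ] EuclideanSpace ℂ (Fin M))
    (δ₁ ε : ℝ)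
    (hyp : ∀ v : EuclideanSpace ℂ (Fin N), ‖v‖ = 1 →
      ∀ (X : Matrix (Fin N) (Fin N) ℂ) (hX : X.IsHermitian),
        ‖(inner ℂ (toMatE X) (((LinearMap.adjoint A ∘ₗ A) -
            (LinearMap.id : EuclideanSpace ℂ (Fin N × Fin N) →ₗ[ℂ]
              EuclideanSpace ℂ (Fin N × Fin N))) (outerE v)) : ℂ)‖ ≤
          δ₁ * (∑ i, |hX.eigenvalues i|))
    (ρ ρt : EuclideanSpace ℂ (Fin N)) (hρt : ‖ρt‖ = 1)
    (hdist : pdist ρ ρt ≤ ε) (hε : ε < 1) (δ₂ : ℝ)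
    (hδ₂ : δ₂ = Real.sqrt 2 * (2 + ε) * δ₁ / Real.sqrt ((1 - ε) * (2 - ε))) :
    ‖(inner ℂ (outerE ρ - outerE ρt) (((LinearMap.adjoint A ∘ₗ A) -
        (LinearMap.id : EuclideanSpace ℂ (Fin N × Fin N) →ₗ[ℂ]
          EuclideanSpace ℂ (Fin N × Fin N))) (outerE ρ - outerE ρt)) : ℂ)‖ ≤
      δ₂ * ‖outerE ρ - outerE ρt‖ ^ 2 ∧
    (1 - δ₂) * ‖outerE ρ - outerE ρt‖ ^ 2 ≤ ‖A (outerE ρ - outerE ρt)‖ ^ 2 ∧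
    ‖A (outerE ρ - outerE ρt)‖ ^ 2 ≤ (1 + δ₂) * ‖outerE ρ - outerE ρt‖ ^ 2 := by
  classical
  set T : EuclideanSpace ℂ (Fin N × Fin N) →ₗ[ℂ] EuclideanSpace ℂ (Fin N × Fin N) :=
    (LinearMap.adjoint A ∘ₗ A) - LinearMap.id with hT
  set E : EuclideanSpace ℂ (Fin N × Fin N) := outerE ρ - outerE ρt with hEdef
  -- `ε` is nonnegative
  have hε0 : 0 ≤ ε := by
    refine le_trans ?_ hdist
    exact Real.sInf_nonneg (by rintro r ⟨φ, rfl⟩; exact norm_nonneg _)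
  -- The matrix `ρρᴴ - ρtρtᴴ`
  set Mm : Matrix (Fin N) (Fin N) ℂ :=
    Matrix.of (fun i j => ρ i * conj (ρ j) - ρt i * conj (ρt j)) with hMm
  have hM : Mm.IsHermitian := by
    ext i j
    simp only [hMm, Matrix.conjTranspose_apply, Matrix.of_apply, star_sub, star_mul',
      RCLike.star_def, Complex.conj_conj]
    ring
  have hE : toMatE Mm = E := rfl
  set lam : Fin N → ℝ := hM.eigenvalues with hlam
  set v : Fin N → EuclideanSpace ℂ (Fin N) := fun k => hM.eigenvectorBasis k with hv
  have hsum : ∀ (f : Fin N → EuclideanSpace ℂ (Fin N × Fin N)) (p : Fin N × Fin N),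
      (∑ k, f k) p = ∑ k, f k p := fun f p =>
    map_sum (PiLp.projₗ (𝕜 := ℂ) 2 (fun _ : Fin N × Fin N => ℂ) p) f Finset.univ
  -- Entrywise spectral decomposition
  have hentry : ∀ i j, Mm i j = ∑ k, (lam k : ℂ) * (v k i * conj (v k j)) := by
    intro i j
    nth_rewrite 1 [hM.spectral_theorem]
    rw [Unitary.conjStarAlgAut_apply]
    rw [Matrix.mul_apply]
    simp only [Matrix.mul_diagonal, Matrix.star_apply,
      Matrix.IsHermitian.eigenvectorUnitary_apply, Function.comp_apply, RCLike.star_def,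
      Matrix.diagonal_apply]
    exact Finset.sum_congr rfl fun k _ => by
      rw [show ((lam k : ℂ)) = RCLike.ofReal (lam k) from rfl]; ring
  have hspec : E = ∑ k, (lam k : ℂ) • outerE (v k) := by
    rw [← hE]
    apply PiLp.ext; intro p
    rw [hsum]
    simp only [PiLp.smul_apply, smul_eq_mul, outerE, toMatE, PiLp.toLp_apply]
    exact hentry p.1 p.2
  -- The eigenvector outer products are orthonormal
  have hvON := hM.eigenvectorBasis.orthonormal
  have horthE : Orthonormal ℂ (fun k => outerE (v k)) := by
    rw [orthonormal_iff_ite]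
    intro i j
    rw [hv, inner_outerE]
    rw [orthonormal_iff_ite] at hvON
    rw [hvON i j]
    by_cases h : i = j <;> simp [h]
  -- `‖E‖² = ∑ λ²`
  have hnormsq : ‖E‖ ^ 2 = ∑ k, (lam k) ^ 2 := by
    have hip2 : (inner ℂ E E : ℂ) = ∑ k, conj ((lam k : ℂ)) * (lam k : ℂ) := by
      rw [hspec]
      exact horthE.inner_sum _ _ Finset.univ
    have h := inner_self_eq_norm_sq (𝕜 := ℂ) E
    rw [hip2, map_sum] at h
    rw [← h]
    exact Finset.sum_congr rfl fun k _ => by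
      simp [Complex.conj_ofReal, ← Complex.ofReal_mul, sq]
  -- support of the spectrum has at most two elements
  set S : Finset (Fin N) := Finset.univ.filter (fun k => lam k ≠ 0) with hS
  set W : Submodule ℂ (EuclideanSpace ℂ (Fin N)) := Submodule.span ℂ {ρ, ρt} with hW
  have hmem : ∀ k ∈ S, v k ∈ W := by
    intro k hk
    have hne : lam k ≠ 0 := (Finset.mem_filter.mp hk).2
    have hmv := hM.mulVec_eigenvectorBasis k
    set u : EuclideanSpace ℂ (Fin N) := v k with hu
    set c1 : ℂ := ∑ j, conj (ρ j) * u j with hc1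
    set c2 : ℂ := ∑ j, conj (ρt j) * u j with hc2
    have key : u = ((lam k : ℂ)⁻¹ * c1) • ρ - ((lam k : ℂ)⁻¹ * c2) • ρt := by
      apply PiLp.ext; intro i
      have h1 := congrFun hmv i
      have h2 : Mm.mulVec u.ofLp i = c1 * ρ i - c2 * ρt i := by
        simp only [Matrix.mulVec, dotProduct, hMm, Matrix.of_apply, sub_mul, hc1, hc2,
          Finset.sum_sub_distrib, Finset.mul_sum]
        congr 1 <;> rw [Finset.sum_mul] <;> exact Finset.sum_congr rfl fun j _ => by ring
      have h4 : (lam k : ℂ) * u i = c1 * ρ i - c2 * ρt i := by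
        rw [← h2, h1]
        simp [Pi.smul_apply, Complex.real_smul]
        rfl
      have hlz : (lam k : ℂ) ≠ 0 := by exact_mod_cast hne
      simp only [PiLp.sub_apply, PiLp.smul_apply, smul_eq_mul]
      rw [mul_assoc, mul_assoc, ← mul_sub, ← h4, ← mul_assoc, inv_mul_cancel₀ hlz, one_mul]
    rw [key]
    have hρ : ρ ∈ W := Submodule.subset_span (by simp)
    have hρt2 : ρt ∈ W := Submodule.subset_span (by simp)
    exact Submodule.sub_mem _ (Submodule.smul_mem _ _ hρ) (Submodule.smul_mem _ _ hρt2)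
  have hrank : Module.finrank ℂ W ≤ 2 := by
    refine le_trans (finrank_span_le_card _) ?_
    rw [Set.toFinset_insert, Set.toFinset_singleton]
    exact le_trans (Finset.card_insert_le _ _) (by simp)
  have hcard : S.card ≤ 2 := by
    have hli : LinearIndependent ℂ (fun k : {x // x ∈ S} =>
        (⟨v k, hmem k k.2⟩ : W)) := by
      apply LinearIndependent.of_comp W.subtype
      exact (hvON.linearIndependent).comp _ Subtype.val_injective
    have h := hli.fintype_card_le_finrank
    simpa [Fintype.card_coe] using le_trans h hrank
  -- nuclear norm bound : (∑ |λ|)² ≤ 2 ‖E‖²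
  set L : ℝ := ∑ k, |lam k| with hL
  have hLS : L = ∑ k ∈ S, |lam k| := by
    rw [hL]
    refine (Finset.sum_subset (Finset.subset_univ S) fun k _ hk => ?_).symm
    have : lam k = 0 := by
      by_contra hne
      exact hk (by rw [hS]; simp [hne])
    simp [this]
  have hL2 : L ^ 2 ≤ 2 * ‖E‖ ^ 2 := by
    have hcs : (∑ k ∈ S, |lam k|) ^ 2 ≤ (S.card : ℝ) * ∑ k ∈ S, |lam k| ^ 2 :=
      sq_sum_le_card_mul_sum_sq
    have hsq : ∑ k ∈ S, |lam k| ^ 2 ≤ ∑ k, (lam k) ^ 2 := by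
      simp_rw [sq_abs]
      exact Finset.sum_le_sum_of_subset_of_nonneg (Finset.subset_univ S)
        (fun k _ _ => sq_nonneg _)
    have hc2 : (S.card : ℝ) ≤ 2 := by exact_mod_cast hcard
    have hsqnn : (0:ℝ) ≤ ∑ k ∈ S, |lam k| ^ 2 :=
      Finset.sum_nonneg fun k _ => sq_nonneg _
    rw [hLS, hnormsq]
    nlinarith
  have hLnn : 0 ≤ L := Finset.sum_nonneg fun k _ => abs_nonneg _
  -- bound each eigendirection with the hypothesis
  have hbound : ∀ k, ‖(inner ℂ E (T (outerE (v k))) : ℂ)‖ ≤ δ₁ * L := by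
    intro k
    have h := hyp (v k) (hvON.1 k) Mm hM
    rwa [hE] at h
  -- main term bound
  have hip : (inner ℂ E (T E) : ℂ) = ∑ k, (lam k : ℂ) * (inner ℂ E (T (outerE (v k))) : ℂ) := by
    have hTE : T E = ∑ k, (lam k : ℂ) • T (outerE (v k)) := by
      conv_lhs => rw [hspec]
      rw [map_sum]
      exact Finset.sum_congr rfl fun k _ => map_smul T _ _
    rw [hTE, inner_sum]
    exact Finset.sum_congr rfl fun k _ => inner_smul_right _ _ _
  have hmain : ‖(inner ℂ E (T E) : ℂ)‖ ≤ δ₁ * L ^ 2 := by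
    rw [hip]
    calc ‖∑ k, (lam k : ℂ) * (inner ℂ E (T (outerE (v k))) : ℂ)‖
        ≤ ∑ k, ‖(lam k : ℂ) * (inner ℂ E (T (outerE (v k))) : ℂ)‖ := norm_sum_le _ _
      _ = ∑ k, |lam k| * ‖(inner ℂ E (T (outerE (v k))) : ℂ)‖ := by
          exact Finset.sum_congr rfl fun k _ => by
            rw [norm_mul, Complex.norm_real, Real.norm_eq_abs]
      _ ≤ ∑ k, |lam k| * (δ₁ * L) := Finset.sum_le_sum fun k _ =>
            mul_le_mul_of_nonneg_left (hbound k) (abs_nonneg _)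
      _ = L * (δ₁ * L) := by rw [← Finset.sum_mul]
      _ = δ₁ * L ^ 2 := by ring
  -- trivial case
  by_cases hE0 : E = 0
  · refine ⟨?_, ?_, ?_⟩ <;> simp [hE0]
  -- nontrivial case: δ₁ ≥ 0
  have hEpos : 0 < ‖E‖ ^ 2 := pow_pos (norm_pos_iff.mpr hE0) 2
  have hLpos : 0 < L := by
    rcases hLnn.lt_or_eq with h | h
    · exact h
    · exfalso
      apply hE0
      have hall : ∀ k, lam k = 0 := by
        intro k
        have := Finset.sum_eq_zero_iff_of_nonneg (fun k _ => abs_nonneg (lam k)) |>.mp h.symm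
        simpa using this k (Finset.mem_univ k)
      rw [hspec]
      exact Finset.sum_eq_zero fun k _ => by rw [hall k]; simp
  have hδ₁nn : 0 ≤ δ₁ := by
    have hk : ∃ k, lam k ≠ 0 := by
      by_contra h
      push_neg at h
      have : L = 0 := by rw [hL]; exact Finset.sum_eq_zero fun k _ => by rw [h k]; simp
      exact hLpos.ne' this
    obtain ⟨k, _⟩ := hk
    have h1 := le_trans (norm_nonneg _) (hbound k)
    exact nonneg_of_mul_nonneg_right (mul_comm δ₁ L ▸ h1) hLpos
  -- δ₂ ≥ 2 δ₁
  have hD : 0 < Real.sqrt ((1 - ε) * (2 - ε)) := Real.sqrt_pos.mpr (by nlinarith)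
  have hnum : 2 * Real.sqrt ((1 - ε) * (2 - ε)) ≤ Real.sqrt 2 * (2 + ε) := by
    have h1 : 2 * Real.sqrt ((1 - ε) * (2 - ε)) = Real.sqrt (4 * ((1 - ε) * (2 - ε))) := by
      rw [Real.sqrt_mul (by norm_num : (0:ℝ) ≤ 4)]
      rw [show Real.sqrt 4 = 2 by
        rw [show (4:ℝ) = 2 ^ 2 by norm_num, Real.sqrt_sq (by norm_num : (0:ℝ) ≤ 2)]]
    have h2 : Real.sqrt 2 * (2 + ε) = Real.sqrt (2 * (2 + ε) ^ 2) := by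
      rw [Real.sqrt_mul (by norm_num : (0:ℝ) ≤ 2), Real.sqrt_sq (by linarith : (0:ℝ) ≤ 2 + ε)]
    rw [h1, h2]
    exact Real.sqrt_le_sqrt (by nlinarith)
  have h2δ : 2 * δ₁ ≤ δ₂ := by
    rw [hδ₂, le_div_iff₀ hD]
    nlinarith [mul_le_mul_of_nonneg_right hnum hδ₁nn]
  -- part one
  have hpart1 : ‖(inner ℂ E (T E) : ℂ)‖ ≤ δ₂ * ‖E‖ ^ 2 := by
    have : δ₁ * L ^ 2 ≤ δ₂ * ‖E‖ ^ 2 := by nlinarith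
    linarith [hmain]
  refine ⟨hpart1, ?_, ?_⟩ <;>
  { have hreal : (inner ℂ E (T E) : ℂ) = ((‖A E‖ ^ 2 - ‖E‖ ^ 2 : ℝ) : ℂ) := by
      have hTE2 : T E = (LinearMap.adjoint A) (A E) - E := by
        rw [hT]
        simp only [LinearMap.sub_apply, LinearMap.coe_comp, Function.comp_apply,
          LinearMap.id_apply]
      rw [hTE2, inner_sub_right, LinearMap.adjoint_inner_right,
        inner_self_eq_norm_sq_to_K, inner_self_eq_norm_sq_to_K]
      push_cast
      exact rfl
    have habs : |‖A E‖ ^ 2 - ‖E‖ ^ 2| ≤ δ₂ * ‖E‖ ^ 2 := by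
      have := hpart1
      rwa [hreal, Complex.norm_real, Real.norm_eq_abs] at this
    have h := abs_le.mp habs
    linarith [h.1, h.2] }
end

section
/- Let ρ_t be a unit vector, ρ ∈ ℂ^N with dist(ρ, ρ_t) ≤ ε, ρ̂_t = e^{iΦ(ρ)}ρ_t the closest global solution, and let ∇J(ρ) = ‖ρ‖²ρ - (ρ̂_t^H ρ)ρ̂_t + P ρ where P is a Hermitian matrix with spectral norm ‖P‖ ≤ δ₁(2+ε)‖ρ - ρ̂_t‖. Then ‖∇J(ρ)‖ ≤ (1+ε)(2+ε)(1+δ₁)·dist(ρ, ρ_t). -/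
open ComplexConjugate

/-- Local Lipschitz bound on the gradient: with `ρ̂_t = e^{iΦ(ρ)}ρ_t` the closest
global solution, `∇J(ρ) = ‖ρ‖²ρ - (ρ̂_tᴴρ)ρ̂_t + Pρ` where `P` is Hermitian with
`‖P‖ ≤ δ₁(2+ε)‖ρ - ρ̂_t‖`, one has `‖∇J(ρ)‖ ≤ (1+ε)(2+ε)(1+δ₁)·dist(ρ, ρ_t)`. -/
theorem gradient_lipschitz_bound {N : ℕ} (ρ ρt ρhat : EuclideanSpace ℂ (Fin N))
    (ε δ₁ Φ : ℝ) (hρt : ‖ρt‖ = 1) (hdist : pdist ρ ρt ≤ ε)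
    (hhat : ρhat = Complex.exp (Φ * Complex.I) • ρt)
    (hopt : ‖ρ - ρhat‖ = pdist ρ ρt)
    (P : Matrix (Fin N) (Fin N) ℂ) (hP : P.IsHermitian)
    (hPnorm : specNorm P ≤ δ₁ * (2 + ε) * ‖ρ - ρhat‖) :
    ‖((‖ρ‖ ^ 2 : ℝ) : ℂ) • ρ - (inner ℂ ρhat ρ : ℂ) • ρhat +
        Matrix.toEuclideanLin P ρ‖ ≤
      (1 + ε) * (2 + ε) * (1 + δ₁) * pdist ρ ρt := by
  have hhatnorm : ‖ρhat‖ = 1 := by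
    rw [hhat, norm_smul, Complex.norm_exp_ofReal_mul_I, hρt]
    ring
  set d : ℝ := ‖ρ - ρhat‖ with hd
  have hd0 : 0 ≤ d := norm_nonneg _
  have hdε : d ≤ ε := hopt ▸ hdist
  have hr0 : (0:ℝ) ≤ ‖ρ‖ := norm_nonneg _
  have hrle : ‖ρ‖ ≤ 1 + ε := by
    calc ‖ρ‖ = ‖(ρ - ρhat) + ρhat‖ := by rw [sub_add_cancel]
    _ ≤ ‖ρ - ρhat‖ + ‖ρhat‖ := norm_add_le _ _
    _ ≤ ε + 1 := by rw [hhatnorm]; linarith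
    _ = 1 + ε := by ring
  have hspec0 : 0 ≤ specNorm P := norm_nonneg _
  -- rewrite the first two terms
  have key : ((‖ρ‖ ^ 2 : ℝ) : ℂ) • ρ - (inner ℂ ρhat ρ : ℂ) • ρhat
      = (inner ℂ (ρ - ρhat) ρ : ℂ) • ρ + (inner ℂ ρhat ρ : ℂ) • (ρ - ρhat) := by
    have h1 : ((‖ρ‖ ^ 2 : ℝ) : ℂ) = (inner ℂ ρ ρ : ℂ) := by
      rw [inner_self_eq_norm_sq_to_K]; norm_num
    rw [h1, inner_sub_left, sub_smul, smul_sub]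
    abel
  have hPρ : ‖Matrix.toEuclideanLin P ρ‖ ≤ specNorm P * ‖ρ‖ :=
    (LinearMap.toContinuousLinearMap (Matrix.toEuclideanLin P)).le_opNorm ρ
  have hA : ‖(inner ℂ (ρ - ρhat) ρ : ℂ) • ρ‖ ≤ d * ‖ρ‖ * ‖ρ‖ := by
    rw [norm_smul]
    have := norm_inner_le_norm (𝕜 := ℂ) (ρ - ρhat) ρ
    exact mul_le_mul_of_nonneg_right this hr0
  have hB : ‖(inner ℂ ρhat ρ : ℂ) • (ρ - ρhat)‖ ≤ ‖ρ‖ * d := by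
    rw [norm_smul]
    have := norm_inner_le_norm (𝕜 := ℂ) ρhat ρ
    rw [hhatnorm] at this
    have : ‖(inner ℂ ρhat ρ : ℂ)‖ ≤ ‖ρ‖ := by simpa using this
    exact mul_le_mul_of_nonneg_right this hd0
  have htot : ‖((‖ρ‖ ^ 2 : ℝ) : ℂ) • ρ - (inner ℂ ρhat ρ : ℂ) • ρhat +
      Matrix.toEuclideanLin P ρ‖ ≤ d * ‖ρ‖ * ‖ρ‖ + ‖ρ‖ * d + specNorm P * ‖ρ‖ := by
    rw [key]
    calc ‖(inner ℂ (ρ - ρhat) ρ : ℂ) • ρ + (inner ℂ ρhat ρ : ℂ) • (ρ - ρhat) +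
        Matrix.toEuclideanLin P ρ‖
        ≤ ‖(inner ℂ (ρ - ρhat) ρ : ℂ) • ρ + (inner ℂ ρhat ρ : ℂ) • (ρ - ρhat)‖ +
          ‖Matrix.toEuclideanLin P ρ‖ := norm_add_le _ _
      _ ≤ (‖(inner ℂ (ρ - ρhat) ρ : ℂ) • ρ‖ + ‖(inner ℂ ρhat ρ : ℂ) • (ρ - ρhat)‖) +
          ‖Matrix.toEuclideanLin P ρ‖ := by gcongr; exact norm_add_le _ _
      _ ≤ d * ‖ρ‖ * ‖ρ‖ + ‖ρ‖ * d + specNorm P * ‖ρ‖ :=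
          add_le_add (add_le_add hA hB) hPρ
  rw [← hopt]
  refine htot.trans ?_
  nlinarith [mul_le_mul_of_nonneg_right hPnorm hr0, mul_nonneg hd0 hr0,
    mul_le_mul_of_nonneg_left hrle hd0, mul_le_mul_of_nonneg_left hrle hspec0,
    mul_le_mul_of_nonneg_right hrle hd0, sq_nonneg (‖ρ‖ - (1+ε)), mul_nonneg hspec0 hr0]
end
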